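/- Let Δt₁ > 0 and Δt₂ > 0, and set Δt := 2 Δt₁ Δt₂ / (Δt₁ + Δt₂) and γ := Δt² / (2 Δt₁ Δt₂). Then: (a) 0 < γ ≤ 1; (b) γ (Δt₁ + Δt₂) = Δt and γ Δt₁ Δt₂ = Δt²/2; (c) consequently, in any real vector space, for all vectors y, F, D: (1 − γ) y + γ ( y + (Δt₁ + Δt₂) F + Δt₁ Δt₂ D ) = y + Δt F + (Δt²/2) D; and (d) the update y^{n+1} := (1 − γ) y^n + γ ỹ^{n+2} is a convex combination of y^n and ỹ^{n+2}, so that if all entries of y^n ∈ ℝ^d and ỹ^{n+2} ∈ ℝ^d are nonnegative then so are all entries of y^{n+1}. -/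

import Mathlib

/-- properties of the modified Heun scheme with variable time steps. -/
theorem stmt12 (Δt₁ Δt₂ : ℝ) (h1 : 0 < Δt₁) (h2 : 0 < Δt₂)
    (Δt γ : ℝ) (hΔt : Δt = 2 * Δt₁ * Δt₂ / (Δt₁ + Δt₂))
    (hγ : γ = Δt ^ 2 / (2 * Δt₁ * Δt₂)) :
    (0 < γ ∧ γ ≤ 1) ∧
    (γ * (Δt₁ + Δt₂) = Δt ∧ γ * Δt₁ * Δt₂ = Δt ^ 2 / 2) ∧
    (∀ (V : Type*) [AddCommGroup V] [Module ℝ V] (y F D : V),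
        (1 - γ) • y + γ • (y + (Δt₁ + Δt₂) • F + (Δt₁ * Δt₂) • D)
          = y + Δt • F + (Δt ^ 2 / 2) • D) ∧
    (∀ (d : ℕ) (yn yt : Fin d → ℝ), (∀ i, 0 ≤ yn i) → (∀ i, 0 ≤ yt i) →
        ∀ i, 0 ≤ ((1 - γ) • yn + γ • yt) i) := by
  have hs : 0 < Δt₁ + Δt₂ := by linarith
  have hγ' : γ = 2 * Δt₁ * Δt₂ / (Δt₁ + Δt₂) ^ 2 := by
    rw [hγ, hΔt]; field_simp
  have hγpos : 0 < γ := by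
    rw [hγ']; positivity
  have hγle : γ ≤ 1 := by
    rw [hγ', div_le_one (by positivity)]
    nlinarith [sq_nonneg (Δt₁ - Δt₂)]
  have hb1 : γ * (Δt₁ + Δt₂) = Δt := by
    rw [hγ', hΔt]; field_simp
  have hb2 : γ * Δt₁ * Δt₂ = Δt ^ 2 / 2 := by
    rw [hγ', hΔt]; field_simp
  refine ⟨⟨hγpos, hγle⟩, ⟨hb1, hb2⟩, ?_, ?_⟩
  · intro V _ _ y F D
    have : γ • ((Δt₁ + Δt₂) • F) = Δt • F := by
      rw [smul_smul, hb1]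
    have h2' : γ • ((Δt₁ * Δt₂) • D) = (Δt ^ 2 / 2) • D := by
      rw [smul_smul, ← hb2]; ring_nf
    rw [smul_add, smul_add, this, h2', sub_smul, one_smul]
    abel
  · intro d yn yt hn ht i
    simp only [Pi.add_apply, Pi.smul_apply, smul_eq_mul]
    have := hn i; have := ht i
    nlinarith
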